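/- arXiv:1907.12405 — 2 statements merged into one kernel-verified Lean document; each statement's English description precedes it below -/
import Mathlib

section
/- Assume in addition that the topological support of π is the interval [a,b] with 0 < a < b, and let k ∈ ℕ* satisfy (k−1)(b−a) ≥ a. Then the topological support of the law of B_{kb} is [0,b], and the topological support of η is [0,b]. -/
open MeasureTheory ProbabilityTheory Filter Set

noncomputable section

/-- Partial sums `S n = X 1 + ... + X n` of the waiting times. -/
def rwSum {Ω : Type*} (X : ℕ → Ω → ℝ) (n : ℕ) (ω : Ω) : ℝ :=
  ∑ i ∈ Finset.range n, X i ω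

/-- Residual lifetime `B t = inf {S n : S n > t} - t` of the renewal process. -/
def resLife {Ω : Type*} (X : ℕ → Ω → ℝ) (t : ℝ) (ω : Ω) : ℝ :=
  sInf {x | ∃ n : ℕ, x = rwSum X n ω ∧ t < x} - t

/-- The functional `η(f) = (1/μ) ∫₀^∞ E(f(Y-s) 1_{Y-s ≥ 0}) ds`, `Y ~ π`. -/
def etaF (π : Measure ℝ) (μ : ℝ) (f : ℝ → ℝ) : ℝ :=
  (1 / μ) * ∫ s in Set.Ici (0 : ℝ), (∫ y, Set.indicator (Set.Ici (0 : ℝ)) f (y - s) ∂π)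

/-- `φ(x) = e^{(θ-ε')x}` for `x ≥ 0`, `φ(x) = 1` for `x < 0`. -/
def phiF (θ ε' : ℝ) (x : ℝ) : ℝ := if 0 ≤ x then Real.exp ((θ - ε') * x) else 1

/-- Topological support of a measure: points all of whose open neighbourhoods have
positive measure. -/
def msupport {α : Type*} [TopologicalSpace α] [MeasurableSpace α] (m : Measure α) :
    Set α := {x | ∀ U : Set α, IsOpen U → x ∈ U → m U ≠ 0}

/-- complement of msupport is null, for measures on ℝ -/
lemma msupport_compl_null (m : Measure ℝ) : m (msupport m)ᶜ = 0 := by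
  have h : ∀ x ∈ (msupport m)ᶜ, ∃ U : Set ℝ, IsOpen U ∧ x ∈ U ∧ m U = 0 := by
    intro x hx
    simp only [msupport, mem_compl_iff, mem_setOf_eq, not_forall] at hx
    obtain ⟨U, hU, hxU, hm⟩ := hx
    exact ⟨U, hU, hxU, by simpa using hm⟩
  choose! U hUo hxU hU0 using h
  have hcover : (msupport m)ᶜ ⊆ ⋃ x ∈ (msupport m)ᶜ, U x := fun x hx =>
    mem_biUnion hx (hxU x hx)
  obtain ⟨T, hTc, hTeq⟩ := TopologicalSpace.isOpen_iUnion_countable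
    (fun x : ↥(msupport m)ᶜ => U x) (fun x => hUo x x.2)
  have hsub : (msupport m)ᶜ ⊆ ⋃ x ∈ T, U (x : ℝ) := by
    intro y hy
    have : y ∈ ⋃ x : ↥(msupport m)ᶜ, U x := mem_iUnion.2 ⟨⟨y, hy⟩, hxU y hy⟩
    rwa [← hTeq] at this
  refine measure_mono_null hsub ?_
  refine (measure_biUnion_null_iff hTc).2 ?_
  intro x hx
  exact hU0 x x.2

lemma rwSum_succ {Ω : Type*} (X : ℕ → Ω → ℝ) (n : ℕ) (ω : Ω) :
    rwSum X (n + 1) ω = rwSum X n ω + X n ω := by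
  simp [rwSum, Finset.sum_range_succ]

lemma rwSum_zero {Ω : Type*} (X : ℕ → Ω → ℝ) (ω : Ω) : rwSum X 0 ω = 0 := by
  simp [rwSum]

lemma measurable_rwSum {Ω : Type*} [MeasurableSpace Ω] {X : ℕ → Ω → ℝ}
    (hX : ∀ n, Measurable (X n)) (n : ℕ) : Measurable (rwSum X n) := by
  unfold rwSum
  exact Finset.measurable_sum _ fun i _ => hX i

lemma measurable_resLife {Ω : Type*} [MeasurableSpace Ω] {X : ℕ → Ω → ℝ}
    (hX : ∀ n, Measurable (X n)) (t : ℝ) : Measurable (resLife X t) := by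
  have h : Measurable fun ω => sInf {x | ∃ n : ℕ, x = rwSum X n ω ∧ t < x} := by
    apply measurable_of_Iio
    intro c
    have : (fun ω => sInf {x | ∃ n : ℕ, x = rwSum X n ω ∧ t < x}) ⁻¹' Iio c =
        {ω | ∃ n : ℕ, t < rwSum X n ω ∧ rwSum X n ω < c} ∪
        ({ω | ∀ n : ℕ, ¬ t < rwSum X n ω} ∩ {ω | (0:ℝ) < c}) := by
      ext ω
      simp only [mem_preimage, mem_Iio, mem_union, mem_setOf_eq, mem_inter_iff]
      set T := {x | ∃ n : ℕ, x = rwSum X n ω ∧ t < x} with hT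
      constructor
      · intro hc
        by_cases hne : T.Nonempty
        · have hbdd : BddBelow T := ⟨t, fun x hx => le_of_lt hx.choose_spec.2⟩
          rw [show sInf T = sInf T from rfl] at hc
          obtain ⟨x, hxT, hxc⟩ := (csInf_lt_iff hbdd hne).1 hc
          obtain ⟨n, rfl, hn⟩ := hxT
          exact Or.inl ⟨n, hn, hxc⟩
        · right
          constructor
          · intro n hn
            exact hne ⟨rwSum X n ω, n, rfl, hn⟩
          · have : T = ∅ := not_nonempty_iff_eq_empty.1 hne
            rw [this] at hc
            simpa [Real.sInf_empty] using hc
      · rintro (⟨n, hn, hnc⟩ | ⟨hall, hc⟩)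
        · have hbdd : BddBelow T := ⟨t, fun x hx => le_of_lt hx.choose_spec.2⟩
          have hne : T.Nonempty := ⟨rwSum X n ω, n, rfl, hn⟩
          exact lt_of_le_of_lt (csInf_le hbdd ⟨n, rfl, hn⟩) hnc
        · have : T = ∅ := by
            ext x
            simp only [hT, mem_setOf_eq, mem_empty_iff_false, iff_false]
            rintro ⟨n, rfl, hn⟩
            exact hall n hn
          rw [this]
          simpa [Real.sInf_empty] using hc
    rw [this]
    apply MeasurableSet.union
    · rw [show {ω | ∃ n : ℕ, t < rwSum X n ω ∧ rwSum X n ω < c} =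
        ⋃ n : ℕ, {ω | t < rwSum X n ω ∧ rwSum X n ω < c} by ext; simp]
      exact MeasurableSet.iUnion fun n =>
        ((measurable_rwSum hX n) measurableSet_Ioi).inter
          ((measurable_rwSum hX n) measurableSet_Iio)
    · refine MeasurableSet.inter ?_ ?_
      · rw [show {ω | ∀ n : ℕ, ¬ t < rwSum X n ω} = ⋂ n : ℕ, {ω | ¬ t < rwSum X n ω} by ext; simp]
        refine MeasurableSet.iInter fun n => ?_
        have : {ω | ¬ t < rwSum X n ω} = rwSum X n ⁻¹' Iic t := by
          ext; simp [not_lt]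
        rw [this]
        exact (measurable_rwSum hX n) measurableSet_Iic
      · by_cases hc : (0:ℝ) < c
        · simp [hc]
        · simp [hc]
  exact h.sub measurable_const

section
variable {Ω : Type*} (X : ℕ → Ω → ℝ) (t : ℝ) (ω : Ω)

lemma rwSum_strictMono (hpos : ∀ n, 0 < X n ω) : StrictMono fun n => rwSum X n ω := by
  apply strictMono_nat_of_lt_succ
  intro n
  rw [rwSum_succ]
  linarith [hpos n]

lemma resLife_eq (hpos : ∀ n, 0 < X n ω) (N : ℕ)
    (hle : ∀ j ≤ N, rwSum X j ω ≤ t) (hgt : t < rwSum X (N + 1) ω) :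
    resLife X t ω = rwSum X (N + 1) ω - t := by
  have hmono := rwSum_strictMono X ω hpos
  have hleast : IsLeast {x | ∃ n : ℕ, x = rwSum X n ω ∧ t < x} (rwSum X (N + 1) ω) := by
    constructor
    · exact ⟨N + 1, rfl, hgt⟩
    · rintro x ⟨n, rfl, hn⟩
      by_cases h : n ≤ N
      · exact absurd hn (not_lt.2 (hle n h))
      · exact hmono.monotone (Nat.succ_le_of_lt (not_le.1 h))
  rw [resLife, hleast.csInf_eq]

lemma resLife_mem_Ioc {a b : ℝ} (ha : 0 < a) (ht : 0 ≤ t)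
    (hmem : ∀ n, X n ω ∈ Set.Icc a b) : resLife X t ω ∈ Set.Ioc 0 b := by
  have hpos : ∀ n, 0 < X n ω := fun n => lt_of_lt_of_le ha (hmem n).1
  have hgrow : ∀ n : ℕ, (n : ℝ) * a ≤ rwSum X n ω := by
    intro n
    induction n with
    | zero => simp [rwSum_zero]
    | succ m ih =>
      rw [rwSum_succ]
      push_cast
      linarith [(hmem m).1]
  have hex : ∃ n : ℕ, t < rwSum X n ω := by
    obtain ⟨n, hn⟩ := exists_nat_gt (t / a)
    refine ⟨n, lt_of_lt_of_le ?_ (hgrow n)⟩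
    calc t = t / a * a := by field_simp
    _ < n * a := by exact mul_lt_mul_of_pos_right hn ha
  classical
  set N' := Nat.find hex with hN'
  have hN'spec : t < rwSum X N' ω := Nat.find_spec hex
  have hN'pos : 1 ≤ N' := by
    rcases Nat.eq_zero_or_pos N' with h | h
    · exfalso
      rw [h] at hN'spec
      rw [rwSum_zero] at hN'spec
      linarith
    · exact h
  obtain ⟨N, hNeq⟩ : ∃ N, N' = N + 1 := ⟨N' - 1, (Nat.succ_pred_eq_of_pos hN'pos).symm⟩
  rw [hNeq] at hN'spec
  have hle : ∀ j ≤ N, rwSum X j ω ≤ t := by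
    intro j hj
    by_contra hcon
    exact Nat.find_min hex (by omega : j < N') (not_le.1 hcon)
  rw [resLife_eq X t ω hpos N hle hN'spec]
  constructor
  · linarith
  · have : rwSum X (N + 1) ω = rwSum X N ω + X N ω := rwSum_succ X N ω
    have h1 := hle N le_rfl
    have h2 := (hmem N).2
    linarith

end

section Key
variable {Ω : Type*} [MeasurableSpace Ω] (P : Measure Ω) [IsProbabilityMeasure P]
  (π : Measure ℝ) [IsProbabilityMeasure π]
  (X : ℕ → Ω → ℝ)

lemma as_icc (hXmeas : ∀ n, Measurable (X n)) (hXlaw : ∀ n, Measure.map (X n) P = π)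
    {a b : ℝ} (hsupp : msupport π = Set.Icc a b) :
    P {ω | ¬ ∀ n, X n ω ∈ Set.Icc a b} = 0 := by
  have hπ0 : π (Set.Icc a b)ᶜ = 0 := by
    have := msupport_compl_null π
    rwa [hsupp] at this
  have hsub : {ω | ¬ ∀ n, X n ω ∈ Set.Icc a b} ⊆ ⋃ n, X n ⁻¹' (Set.Icc a b)ᶜ := by
    intro ω hω
    simp only [mem_setOf_eq, not_forall] at hω
    obtain ⟨n, hn⟩ := hω
    exact mem_iUnion.2 ⟨n, hn⟩
  refine measure_mono_null hsub (measure_iUnion_null fun n => ?_)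
  rw [← Measure.map_apply (hXmeas n) measurableSet_Icc.compl, hXlaw n]
  exact hπ0

set_option maxHeartbeats 1000000 in
lemma key_pos (hXmeas : ∀ n, Measurable (X n)) (hXlaw : ∀ n, Measure.map (X n) P = π)
    (hXindep : iIndepFun X P)
    (a b : ℝ) (ha : 0 < a) (hab : a < b)
    (hsupp : msupport π = Set.Icc a b)
    (k : ℕ) (hk : 1 ≤ k) (hkab : a ≤ ((k : ℝ) - 1) * (b - a))
    (z : ℝ) (hz : z ∈ Set.Ioo 0 b) (ε : ℝ) (hε : 0 < ε) :
    P {ω | resLife X ((k : ℝ) * b) ω ∈ Set.Ioo (z - ε) (z + ε)} ≠ 0 := by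
  classical
  obtain ⟨hz0, hzb⟩ := hz
  set kR : ℝ := (k : ℝ) with hkR
  have hkR1 : 1 ≤ kR := by rw [hkR]; exact_mod_cast hk
  have hkRpos : 0 < kR := by linarith
  have hka : (kR + 1) * a < kR * b := by nlinarith
  set L : ℝ := max (kR * a) (kR * b + z - b) with hL
  set R : ℝ := min (kR * b) (kR * b + z - a) with hR
  have hLR : L < R := by
    rw [hL, hR, max_lt_iff, lt_min_iff, lt_min_iff]
    refine ⟨⟨by nlinarith, by nlinarith⟩, ⟨by linarith, by linarith⟩⟩
  set s : ℝ := (L + R) / 2 with hs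
  have hs1 : kR * a < s := by
    have : kR * a ≤ L := le_max_left _ _
    rw [hs]; linarith
  have hs2 : s < kR * b := by
    have : R ≤ kR * b := min_le_left _ _
    rw [hs]; linarith
  have hs3 : kR * b + z - b < s := by
    have : kR * b + z - b ≤ L := le_max_right _ _
    rw [hs]; linarith
  have hs4 : s < kR * b + z - a := by
    have : R ≤ kR * b + z - a := min_le_right _ _
    rw [hs]; linarith
  set ys : ℝ := s / kR with hys
  have hysa : a < ys := by rw [hys]; rw [lt_div_iff₀ hkRpos]; linarith
  have hysb : ys < b := by rw [hys]; rw [div_lt_iff₀ hkRpos]; linarith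
  have hysum : kR * ys = s := by rw [hys]; field_simp
  set ws : ℝ := kR * b + z - s with hws
  have hwsa : a < ws := by rw [hws]; linarith
  have hwsb : ws < b := by rw [hws]; linarith
  set δ : ℝ := min (kR * b - s) (min ε z) / (2 * (kR + 1)) with hδ
  have hδpos : 0 < δ := by
    rw [hδ]
    apply div_pos
    · exact lt_min (by linarith) (lt_min hε hz0)
    · linarith
  have hc : (0:ℝ) < 2 * (kR + 1) := by linarith
  have hδle : δ * (2 * (kR + 1)) = min (kR * b - s) (min ε z) := by
    rw [hδ]
    field_simp
  clear_value L R s ys ws δ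
  have hδ1 : kR * δ < kR * b - s := by
    have h2 : kR * δ < δ * (2 * (kR + 1)) := by nlinarith [hδpos]
    have h3 := min_le_left (kR * b - s) (min ε z)
    rw [← hδle] at h3
    linarith
  have hδ2 : (kR + 1) * δ < ε := by
    have h2 : (kR + 1) * δ < δ * (2 * (kR + 1)) := by nlinarith [hδpos]
    have h3 := (min_le_right (kR * b - s) (min ε z)).trans (min_le_left ε z)
    rw [← hδle] at h3
    linarith
  have hδ3 : (kR + 1) * δ < z := by
    have h2 : (kR + 1) * δ < δ * (2 * (kR + 1)) := by nlinarith [hδpos]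
    have h3 := (min_le_right (kR * b - s) (min ε z)).trans (min_le_right ε z)
    rw [← hδle] at h3
    linarith
  -- the intervals
  set I : Set ℝ := Set.Ioo (ys - δ) (ys + δ) with hI
  set J : Set ℝ := Set.Ioo (ws - δ) (ws + δ) with hJ
  have hmemsupp : ∀ y : ℝ, y ∈ Set.Icc a b → ∀ U : Set ℝ, IsOpen U → y ∈ U → π U ≠ 0 := by
    intro y hy
    have : y ∈ msupport π := by rw [hsupp]; exact hy
    exact this
  have hπI : π I ≠ 0 :=
    hmemsupp ys ⟨le_of_lt hysa, le_of_lt hysb⟩ I isOpen_Ioo (by constructor <;> [linarith; linarith])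
  have hπJ : π J ≠ 0 :=
    hmemsupp ws ⟨le_of_lt hwsa, le_of_lt hwsb⟩ J isOpen_Ioo (by constructor <;> [linarith; linarith])
  -- the event
  set C : ℕ → Set ℝ := fun i => if i < k then I else J with hC
  have hCmeas : ∀ i, MeasurableSet (C i) := by
    intro i
    simp only [hC]
    split_ifs
    · exact measurableSet_Ioo
    · exact measurableSet_Ioo
  have hPE : P (⋂ i ∈ Finset.range (k + 1), X i ⁻¹' C i) =
      ∏ i ∈ Finset.range (k + 1), π (C i) := by
    rw [hXindep.measure_inter_preimage_eq_mul (Finset.range (k + 1))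
      (sets := C) (fun i _ => hCmeas i)]
    refine Finset.prod_congr rfl fun i _ => ?_
    rw [← hXlaw i, Measure.map_apply (hXmeas i) (hCmeas i)]
  have hPEne : P (⋂ i ∈ Finset.range (k + 1), X i ⁻¹' C i) ≠ 0 := by
    rw [hPE]
    rw [Finset.prod_ne_zero_iff]
    intro i _
    by_cases h : i < k
    · simpa [hC, h] using hπI
    · simpa [hC, h] using hπJ
  set E := ⋂ i ∈ Finset.range (k + 1), X i ⁻¹' C i with hE
  set A := {ω | ∀ n, X n ω ∈ Set.Icc a b} with hA
  have hAc : P Aᶜ = 0 := by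
    have h := as_icc P π X hXmeas hXlaw hsupp
    have he : Aᶜ = {ω | ¬ ∀ n, X n ω ∈ Set.Icc a b} := by
      ext ω
      simp [hA, mem_compl_iff]
    rw [he]
    exact h
  -- on E ∩ A, resLife is in the target window
  have hsubset : E ∩ A ⊆ {ω | resLife X (kR * b) ω ∈ Set.Ioo (z - ε) (z + ε)} := by
    rintro ω ⟨hωE, hωA⟩
    have hmem : ∀ n, X n ω ∈ Set.Icc a b := hωA
    have hpos : ∀ n, 0 < X n ω := fun n => lt_of_lt_of_le ha (hmem n).1
    have hXi : ∀ i < k, X i ω ∈ I := by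
      intro i hi
      have := mem_iInter₂.1 hωE i (Finset.mem_range.2 (by omega))
      simpa [hC, hi] using this
    have hXk : X k ω ∈ J := by
      have := mem_iInter₂.1 hωE k (Finset.mem_range.2 (by omega))
      simpa [hC] using this
    have hSk_lt : rwSum X k ω < s + kR * δ := by
      have h1 : rwSum X k ω < ∑ _i ∈ Finset.range k, (ys + δ) := by
        apply Finset.sum_lt_sum_of_nonempty (Finset.nonempty_range_iff.2 (by omega))
        intro i hi
        exact (hXi i (Finset.mem_range.1 hi)).2
      rw [Finset.sum_const, Finset.card_range, nsmul_eq_mul] at h1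
      calc rwSum X k ω < kR * (ys + δ) := h1
      _ = s + kR * δ := by rw [mul_add, hysum]
    have hSk_gt : s - kR * δ < rwSum X k ω := by
      have h1 : ∑ _i ∈ Finset.range k, (ys - δ) < rwSum X k ω := by
        apply Finset.sum_lt_sum_of_nonempty (Finset.nonempty_range_iff.2 (by omega))
        intro i hi
        exact (hXi i (Finset.mem_range.1 hi)).1
      rw [Finset.sum_const, Finset.card_range, nsmul_eq_mul] at h1
      calc s - kR * δ = kR * (ys - δ) := by rw [mul_sub, hysum]
      _ < rwSum X k ω := h1
    have hSk1 : rwSum X (k + 1) ω = rwSum X k ω + X k ω := rwSum_succ X k ω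
    have hSk1_gt : kR * b + z - (kR + 1) * δ < rwSum X (k + 1) ω := by
      rw [hSk1]
      have := hXk.1
      rw [hws] at *
      nlinarith [hXk.1]
    have hSk1_lt : rwSum X (k + 1) ω < kR * b + z + (kR + 1) * δ := by
      rw [hSk1]
      nlinarith [hXk.2]
    have hmono := (rwSum_strictMono X ω hpos).monotone
    have hle : ∀ j ≤ k, rwSum X j ω ≤ kR * b := by
      intro j hj
      calc rwSum X j ω ≤ rwSum X k ω := hmono hj
      _ ≤ kR * b := by linarith
    have hgt : kR * b < rwSum X (k + 1) ω := by linarith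
    have := resLife_eq X (kR * b) ω hpos k hle hgt
    rw [mem_setOf_eq, this]
    constructor <;> [linarith; linarith]
  -- conclude
  intro hcon
  have h0 : P (E ∩ A) = 0 := measure_mono_null hsubset hcon
  have h1 : P (E \ A) = 0 := by
    rw [diff_eq]
    exact measure_mono_null inter_subset_right hAc
  have h2 : P E ≤ P (E ∩ A) + P (E \ A) := measure_le_inter_add_diff P E A
  rw [h0, h1] at h2
  simp only [add_zero, nonpos_iff_eq_zero] at h2
  exact hPEne h2

lemma part1 (hXmeas : ∀ n, Measurable (X n)) (hXlaw : ∀ n, Measure.map (X n) P = π)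
    (hXindep : iIndepFun X P)
    (a b : ℝ) (ha : 0 < a) (hab : a < b)
    (hsupp : msupport π = Set.Icc a b)
    (k : ℕ) (hk : 1 ≤ k) (hkab : a ≤ ((k : ℝ) - 1) * (b - a)) :
    msupport (Measure.map (resLife X ((k : ℝ) * b)) P) = Set.Icc 0 b := by
  have hb : 0 < b := lt_trans ha hab
  have ht : (0:ℝ) ≤ (k : ℝ) * b := by positivity
  have hmeas : Measurable (resLife X ((k : ℝ) * b)) := measurable_resLife hXmeas _
  have hAc := as_icc P π X hXmeas hXlaw hsupp
  ext x
  constructor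
  · intro hx
    by_contra hxmem
    have : x < 0 ∨ b < x := by
      rcases not_and_or.1 (fun h => hxmem ⟨h.1, h.2⟩ : ¬ (0 ≤ x ∧ x ≤ b)) with h | h
      · exact Or.inl (not_le.1 h)
      · exact Or.inr (not_le.1 h)
    have hnull : ∀ U : Set ℝ, MeasurableSet U → (∀ y ∈ Set.Ioc (0:ℝ) b, y ∉ U) →
        Measure.map (resLife X ((k : ℝ) * b)) P U = 0 := by
      intro U hU hdisj
      rw [Measure.map_apply hmeas hU]
      refine measure_mono_null ?_ hAc
      intro ω hω
      simp only [mem_setOf_eq]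
      intro hall
      exact hdisj _ (resLife_mem_Ioc X _ ω ha ht hall) hω
    rcases this with h | h
    · exact hx (Set.Iio 0) isOpen_Iio h
        (hnull _ measurableSet_Iio (fun y hy => by simp only [mem_Iio, not_lt]; linarith [hy.1]))
    · exact hx (Set.Ioi b) isOpen_Ioi h
        (hnull _ measurableSet_Ioi (fun y hy => by simp only [mem_Ioi, not_lt]; exact hy.2))
  · intro hx U hU hxU
    have hxcl : x ∈ closure (Set.Ioo 0 b) := by
      rw [closure_Ioo (ne_of_lt hb)]
      exact hx
    obtain ⟨z, hzU, hz⟩ : ∃ z, z ∈ U ∧ z ∈ Set.Ioo 0 b := by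
      have := mem_closure_iff.1 hxcl U hU hxU
      obtain ⟨z, hz1, hz2⟩ := this
      exact ⟨z, hz1, hz2⟩
    obtain ⟨ε, hε, hball⟩ := Metric.isOpen_iff.1 hU z hzU
    have hsub : Set.Ioo (z - ε) (z + ε) ⊆ U := by
      rw [← Real.ball_eq_Ioo]
      exact hball
    intro hcon
    refine key_pos P π X hXmeas hXlaw hXindep a b ha hab hsupp k hk hkab z hz ε hε ?_
    have h1 : Measure.map (resLife X ((k : ℝ) * b)) P (Set.Ioo (z - ε) (z + ε)) = 0 :=
      le_antisymm (hcon ▸ measure_mono hsub) zero_le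
    rw [Measure.map_apply hmeas measurableSet_Ioo] at h1
    exact h1

end Key

section Eta
variable (π : Measure ℝ) [IsProbabilityMeasure π]

lemma inner_eq (V : Set ℝ) (hV : MeasurableSet V) (s : ℝ) :
    ∫ y, Set.indicator (Set.Ici (0:ℝ)) (Set.indicator V (1 : ℝ → ℝ)) (y - s) ∂π
      = (π ((fun y => y - s) ⁻¹' (Set.Ici 0 ∩ V))).toReal := by
  have h1 : (fun y : ℝ => Set.indicator (Set.Ici (0:ℝ)) (Set.indicator V (1 : ℝ → ℝ)) (y - s))
      = Set.indicator ((fun y : ℝ => y - s) ⁻¹' (Set.Ici 0 ∩ V)) (1 : ℝ → ℝ) := by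
    funext y
    rw [Set.indicator_indicator]
    by_cases h : y - s ∈ Set.Ici 0 ∩ V
    · have h2 : y ∈ (fun y : ℝ => y - s) ⁻¹' (Set.Ici 0 ∩ V) := h
      rw [Set.indicator_of_mem h, Set.indicator_of_mem h2]
      rfl
    · have h2 : y ∉ (fun y : ℝ => y - s) ⁻¹' (Set.Ici 0 ∩ V) := h
      rw [Set.indicator_of_notMem h, Set.indicator_of_notMem h2]
  rw [h1]
  exact integral_indicator_one (((measurable_id.sub_const s)) (measurableSet_Ici.inter hV))

lemma G_meas (V : Set ℝ) (hV : MeasurableSet V) :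
    Measurable (fun s : ℝ => π ((fun y => y - s) ⁻¹' (Set.Ici 0 ∩ V))) := by
  have hQ : MeasurableSet {p : ℝ × ℝ | p.2 - p.1 ∈ Set.Ici 0 ∩ V} :=
    (measurable_snd.sub measurable_fst) (measurableSet_Ici.inter hV)
  exact measurable_measure_prodMk_left (ν := π) hQ

lemma G_vanish {a b : ℝ} (hsupp : msupport π = Set.Icc a b) (V : Set ℝ) {s : ℝ} (hs : b < s) :
    π ((fun y => y - s) ⁻¹' (Set.Ici 0 ∩ V)) = 0 := by
  have hπ0 : π (Set.Icc a b)ᶜ = 0 := by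
    have := msupport_compl_null π
    rwa [hsupp] at this
  refine measure_mono_null ?_ hπ0
  intro y hy
  have h1 : (0:ℝ) ≤ y - s := (mem_preimage.1 hy).1
  simp only [mem_compl_iff, mem_Icc, not_and_or, not_le]
  right
  linarith

lemma G_integrable {a b : ℝ} (hb : 0 < b) (hsupp : msupport π = Set.Icc a b)
    (V : Set ℝ) (hV : MeasurableSet V) :
    IntegrableOn (fun s : ℝ => (π ((fun y => y - s) ⁻¹' (Set.Ici 0 ∩ V))).toReal)
      (Set.Ici 0) := by
  constructor
  · exact ((G_meas π V hV).ennreal_toReal).aestronglyMeasurable.restrict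
  · rw [hasFiniteIntegral_iff_ofReal (Eventually.of_forall fun s => ENNReal.toReal_nonneg)]
    have hbound : ∀ s ∈ Set.Ici (0:ℝ),
        ENNReal.ofReal ((π ((fun y => y - s) ⁻¹' (Set.Ici 0 ∩ V))).toReal)
          ≤ Set.indicator (Set.Icc (0:ℝ) b) (fun _ => 1) s := by
      intro s hs
      by_cases hsb : s ≤ b
      · rw [Set.indicator_of_mem (show s ∈ Set.Icc (0:ℝ) b from ⟨hs, hsb⟩)]
        have h1 : π ((fun y => y - s) ⁻¹' (Set.Ici 0 ∩ V)) ≤ 1 := prob_le_one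
        rw [ENNReal.ofReal_toReal (lt_of_le_of_lt h1 ENNReal.one_lt_top).ne]
        exact h1
      · rw [G_vanish π hsupp V (not_le.1 hsb)]
        simp
    calc ∫⁻ s in Set.Ici (0:ℝ), ENNReal.ofReal ((π ((fun y => y - s) ⁻¹' (Set.Ici 0 ∩ V))).toReal)
        ≤ ∫⁻ s in Set.Ici (0:ℝ), Set.indicator (Set.Icc (0:ℝ) b) (fun _ => 1) s :=
          setLIntegral_mono (measurable_one.indicator measurableSet_Icc) hbound
      _ ≤ ∫⁻ s, Set.indicator (Set.Icc (0:ℝ) b) (fun _ => 1) s := setLIntegral_le_lintegral _ _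
      _ = volume (Set.Icc (0:ℝ) b) := by
          rw [lintegral_indicator measurableSet_Icc]
          simp
      _ < ⊤ := by
          rw [Real.volume_Icc]
          exact ENNReal.ofReal_lt_top


set_option maxHeartbeats 1000000 in
lemma part2 (hπpos : π (Set.Iic 0) = 0) (hπint : Integrable (fun x => x) π)
    (μ : ℝ) (hμ : μ = ∫ x, x ∂π)
    (a b : ℝ) (ha : 0 < a) (hab : a < b)
    (hsupp : msupport π = Set.Icc a b)
    (η : Measure ℝ) (hη : IsFiniteMeasure η)
    (hid : ∀ f : ℝ → ℝ, Measurable f → (∃ Cf : ℝ, ∀ x, |f x| ≤ Cf) →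
      ∫ x, f x ∂η = etaF π μ f) :
    msupport η = Set.Icc 0 b := by
  have hb : 0 < b := lt_trans ha hab
  have hπ0 : π (Set.Icc a b)ᶜ = 0 := by
    have := msupport_compl_null π
    rwa [hsupp] at this
  have hae : ∀ᵐ x ∂π, x ∈ Set.Icc a b := by
    rw [ae_iff]
    exact measure_mono_null (fun x hx => hx) hπ0
  have hμa : a ≤ μ := by
    rw [hμ]
    have h := integral_mono_ae (integrable_const a) hπint (hae.mono fun x hx => hx.1)
    simpa using h
  have hμpos : 0 < μ := lt_of_lt_of_le ha hμa
  -- identity for indicators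
  have hetaF : ∀ V : Set ℝ, MeasurableSet V → etaF π μ (Set.indicator V 1) =
      (1 / μ) * ∫ s in Set.Ici (0:ℝ), (π ((fun y => y - s) ⁻¹' (Set.Ici 0 ∩ V))).toReal := by
    intro V hV
    unfold etaF
    congr 1
    have h : (fun s : ℝ => ∫ y, Set.indicator (Set.Ici (0:ℝ)) (Set.indicator V (1:ℝ→ℝ)) (y - s) ∂π)
        = fun s : ℝ => (π ((fun y => y - s) ⁻¹' (Set.Ici 0 ∩ V))).toReal :=
      funext (inner_eq π V hV)
    rw [h]
  have hieq : ∀ V : Set ℝ, MeasurableSet V → (η V).toReal =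
      (1 / μ) * ∫ s in Set.Ici (0:ℝ), (π ((fun y => y - s) ⁻¹' (Set.Ici 0 ∩ V))).toReal := by
    intro V hV
    have hmeas : Measurable (Set.indicator V (1:ℝ→ℝ)) := measurable_one.indicator hV
    have hbdd : ∃ Cf : ℝ, ∀ x, |Set.indicator V (1:ℝ→ℝ) x| ≤ Cf := by
      refine ⟨1, fun x => ?_⟩
      by_cases h : x ∈ V
      · simp [Set.indicator_of_mem h]
      · simp [Set.indicator_of_notMem h]
    have h := hid _ hmeas hbdd
    rw [integral_indicator_one hV] at h
    rw [← measureReal_def, h, hetaF V hV]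
  -- η vanishes on (-∞,0) and (b,∞)
  have hIio : η (Set.Iio 0) = 0 := by
    have h := hieq (Set.Iio 0) measurableSet_Iio
    have he : Set.Ici (0:ℝ) ∩ Set.Iio 0 = ∅ := by
      ext y
      simp only [mem_inter_iff, mem_Ici, mem_Iio, mem_empty_iff_false, iff_false, not_and, not_lt]
      intro hy
      exact hy
    rw [he] at h
    simp only [preimage_empty, measure_empty, ENNReal.toReal_zero, integral_zero, mul_zero] at h
    exact (ENNReal.toReal_eq_zero_iff _).1 h |>.resolve_right (measure_ne_top η _)
  have hIoi : η (Set.Ioi b) = 0 := by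
    have h := hieq (Set.Ioi b) measurableSet_Ioi
    have hz : ∫ s in Set.Ici (0:ℝ),
        (π ((fun y => y - s) ⁻¹' (Set.Ici 0 ∩ Set.Ioi b))).toReal = 0 := by
      rw [setIntegral_congr_fun measurableSet_Ici (g := fun _ => (0:ℝ)) ?_]
      · simp
      · intro s hs
        have : π ((fun y => y - s) ⁻¹' (Set.Ici 0 ∩ Set.Ioi b)) = 0 := by
          refine measure_mono_null ?_ hπ0
          intro y hy
          obtain ⟨h1, h2⟩ := mem_preimage.1 hy
          simp only [mem_compl_iff, mem_Icc, not_and_or, not_le]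
          right
          have : (0:ℝ) ≤ s := hs
          simp only [mem_Ioi] at h2
          linarith [h2]
        simp only []
        rw [this]
        simp
    rw [hz, mul_zero] at h
    exact (ENNReal.toReal_eq_zero_iff _).1 h |>.resolve_right (measure_ne_top η _)
  -- conclude
  ext x
  constructor
  · intro hx
    by_contra hxmem
    rcases not_and_or.1 (fun h => hxmem ⟨h.1, h.2⟩ : ¬ ((0:ℝ) ≤ x ∧ x ≤ b)) with h | h
    · exact hx (Set.Iio 0) isOpen_Iio (not_le.1 h) hIio
    · exact hx (Set.Ioi b) isOpen_Ioi (not_le.1 h) hIoi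
  · rintro ⟨hx0, hxb⟩ U hU hxU hcon
    obtain ⟨δ', hδ', hball⟩ := Metric.isOpen_iff.1 hU x hxU
    set δ : ℝ := min δ' (b - a) with hδdef
    have hδpos : 0 < δ := lt_min hδ' (by linarith)
    have hδba : δ ≤ b - a := min_le_right _ _
    have hδδ' : δ ≤ δ' := min_le_left _ _
    have hUsub : Set.Ioo (x - δ) (x + δ) ⊆ U := by
      intro y hy
      apply hball
      rw [Real.ball_eq_Ioo]
      exact ⟨by linarith [hy.1], by linarith [hy.2]⟩
    set s₀ : ℝ := max 0 (b - x - δ/2) with hs₀def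
    have hs₀0 : 0 ≤ s₀ := le_max_left _ _
    have hs₀1 : b - x - δ/2 ≤ s₀ := le_max_right _ _
    have hs₀2 : s₀ ≤ b - δ/2 := by
      apply max_le
      · linarith
      · linarith
    have hs₀3 : x - δ < b - δ/2 - s₀ := by
      rcases max_choice 0 (b - x - δ/2) with h | h
      · rw [hs₀def, h]
        linarith
      · rw [hs₀def, h]
        linarith
    set J : Set ℝ := Set.Ioo (b - δ/4) b with hJdef
    have hπJ : π J ≠ 0 := by
      have hmem : (b - δ/8) ∈ msupport π := by
        rw [hsupp]
        constructor
        · linarith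
        · linarith
      exact hmem J isOpen_Ioo ⟨by linarith, by linarith⟩
    have hJsub : ∀ s ∈ Set.Ioo s₀ (s₀ + δ/4),
        J ⊆ (fun y => y - s) ⁻¹' (Set.Ici 0 ∩ U) := by
      rintro s ⟨hss1, hss2⟩ y ⟨hy1, hy2⟩
      rw [mem_preimage]
      constructor
      · simp only [mem_Ici]
        linarith
      · apply hUsub
        exact ⟨by linarith, by linarith⟩
    have hGlb : ∀ s ∈ Set.Ioo s₀ (s₀ + δ/4),
        (π J).toReal ≤ (π ((fun y => y - s) ⁻¹' (Set.Ici 0 ∩ U))).toReal := by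
      intro s hs
      exact ENNReal.toReal_mono (measure_ne_top π _) (measure_mono (hJsub s hs))
    have hint : IntegrableOn (fun s : ℝ => (π ((fun y => y - s) ⁻¹' (Set.Ici 0 ∩ U))).toReal)
        (Set.Ici 0) := G_integrable π hb hsupp U hU.measurableSet
    have hIoosub : Set.Ioo s₀ (s₀ + δ/4) ⊆ Set.Ici (0:ℝ) := fun s hs => le_of_lt
      (lt_of_le_of_lt hs₀0 hs.1)
    have hvol : (volume (Set.Ioo s₀ (s₀ + δ/4))).toReal = δ/4 := by
      rw [Real.volume_Ioo, ENNReal.toReal_ofReal (by linarith)]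
      ring
    have hpos1 : 0 < ∫ s in Set.Ioo s₀ (s₀ + δ/4),
        (π ((fun y => y - s) ⁻¹' (Set.Ici 0 ∩ U))).toReal := by
      have hconst : ∫ s in Set.Ioo s₀ (s₀ + δ/4), (π J).toReal = (δ/4) * (π J).toReal := by
        rw [setIntegral_const, measureReal_def, hvol, smul_eq_mul]
      have hmono : ∫ s in Set.Ioo s₀ (s₀ + δ/4), (π J).toReal ≤
          ∫ s in Set.Ioo s₀ (s₀ + δ/4),
            (π ((fun y => y - s) ⁻¹' (Set.Ici 0 ∩ U))).toReal := by
        refine setIntegral_mono_on ?_ (hint.mono_set hIoosub) measurableSet_Ioo hGlb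
        refine (integrableOn_const_iff).2 (Or.inr ?_)
        rw [Real.volume_Ioo]
        exact ENNReal.ofReal_lt_top
      have hJpos : 0 < (π J).toReal :=
        ENNReal.toReal_pos hπJ (measure_ne_top π _)
      calc (0:ℝ) < (δ/4) * (π J).toReal := by positivity
      _ = ∫ s in Set.Ioo s₀ (s₀ + δ/4), (π J).toReal := hconst.symm
      _ ≤ _ := hmono
    have hpos2 : ∫ s in Set.Ioo s₀ (s₀ + δ/4),
          (π ((fun y => y - s) ⁻¹' (Set.Ici 0 ∩ U))).toReal ≤
        ∫ s in Set.Ici (0:ℝ),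
          (π ((fun y => y - s) ⁻¹' (Set.Ici 0 ∩ U))).toReal := by
      refine setIntegral_mono_set hint ?_ (HasSubset.Subset.eventuallyLE hIoosub)
      exact Eventually.of_forall fun s => ENNReal.toReal_nonneg
    have h := hieq U hU.measurableSet
    rw [hcon] at h
    simp only [ENNReal.toReal_zero] at h
    have : 0 < (1 / μ) * ∫ s in Set.Ici (0:ℝ),
        (π ((fun y => y - s) ⁻¹' (Set.Ici 0 ∩ U))).toReal := by
      apply mul_pos
      · positivity
      · linarith
    linarith [this, h.symm.le]

end Eta

/-- if the support of `π` is `[a,b]` (`0 < a < b`) and `(k-1)(b-a) ≥ a`,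
then the law of `B_{kb}` and (any measure representing) `η` both have support `[0,b]`. -/
theorem stmt4
    {Ω : Type*} [MeasurableSpace Ω] (P : Measure Ω) [IsProbabilityMeasure P]
    (π : Measure ℝ) [IsProbabilityMeasure π]
    (hπpos : π (Set.Iic 0) = 0)
    (hπint : Integrable (fun x => x) π)
    (μ : ℝ) (hμ : μ = ∫ x, x ∂π)
    (X : ℕ → Ω → ℝ)
    (hXmeas : ∀ n, Measurable (X n))
    (hXlaw : ∀ n, Measure.map (X n) P = π)
    (hXindep : iIndepFun X P)
    (a b : ℝ) (ha : 0 < a) (hab : a < b)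
    (hsupp : msupport π = Set.Icc a b)
    (k : ℕ) (hk : 1 ≤ k) (hkab : a ≤ ((k : ℝ) - 1) * (b - a)) :
    msupport (Measure.map (resLife X ((k : ℝ) * b)) P) = Set.Icc 0 b ∧
      ∀ η : Measure ℝ, IsFiniteMeasure η →
        (∀ f : ℝ → ℝ, Measurable f → (∃ Cf : ℝ, ∀ x, |f x| ≤ Cf) →
          ∫ x, f x ∂η = etaF π μ f) →
        msupport η = Set.Icc 0 b := by
  constructor
  · exact part1 P π X hXmeas hXlaw hXindep a b ha hab hsupp k hk hkab
  · intro η hη hid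
    exact part2 π hπpos hπint μ hμ a b ha hab hsupp η hη hid

end
end

section
/- Let k be an integer with k ≥ q/2 and let α ∈ [q/(2k), 1]. Then P(L_{αT} ≥ k) ≤ K₁(q) ε^{q/2}, where K₁(q) = ∑_{i=1}^q q!/(q−i)!. -/
open MeasureTheory ProbabilityTheory Filter Set
open scoped Classical

noncomputable section

/-- The space `S↓` of nonincreasing nonnegative sequences with total sum at most 1
(encoded by the condition that all partial sums are at most 1). -/
abbrev Sdown : Type := {s : ℕ → ℝ //
  (∀ i, s (i + 1) ≤ s i) ∧ (∀ i, 0 ≤ s i) ∧ ∀ n, ∑ i ∈ Finset.range n, s i ≤ 1}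

/-- Index type for the whole family of random objects: one ratio sequence `ξ̃_u` per node
`u` of the genealogical tree (nodes are encoded as lists, latest generation first, the
`i`-th child of `u` being `i :: u`), together with one uniform tag position per tag. -/
def FragIdx (q : ℕ) : Type := (List ℕ) ⊕ (Fin q)

/-- Codomains of the family of random objects. -/
def FragTgt (q : ℕ) : FragIdx q → Type
  | Sum.inl _ => Sdown
  | Sum.inr _ => ℝ

instance fragTgtMS (q : ℕ) : ∀ i : FragIdx q, MeasurableSpace (FragTgt q i)
  | Sum.inl _ => inferInstanceAs (MeasurableSpace Sdown)
  | Sum.inr _ => inferInstanceAs (MeasurableSpace ℝ)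

/-- The combined family `(ξ̃_u)_u, (Y_k)_k` as a single indexed family. -/
def fragFam {Ω : Type*} (q : ℕ) (xit : List ℕ → Ω → Sdown) (Y : Fin q → Ω → ℝ) :
    ∀ i : FragIdx q, Ω → FragTgt q i
  | Sum.inl u => xit u
  | Sum.inr k => Y k

/-- A conservative fragmentation chain with `q` tagged fragments: the ratio sequences
`ξ̃_u` are i.i.d. with law `ν`, the tag positions `Y_k` are i.i.d. uniform on `[0,1]`,
and the whole family is independent. -/
structure FragModel (Ω : Type*) [MeasurableSpace Ω] (P : Measure Ω) (q : ℕ)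
    (ν : Measure Sdown) where
  xit : List ℕ → Ω → Sdown
  Y : Fin q → Ω → ℝ
  meas_xit : ∀ u, Measurable (xit u)
  meas_Y : ∀ k, Measurable (Y k)
  law_xit : ∀ u, Measure.map (xit u) P = ν
  law_Y : ∀ k, Measure.map (Y k) P = volume.restrict (Set.Icc (0 : ℝ) 1)
  indep : iIndepFun (m := fragTgtMS q) (fragFam q xit Y) P

namespace FragModel

variable {Ω : Type*} [MeasurableSpace Ω] {P : Measure Ω} {q : ℕ} {ν : Measure Sdown}

/-- Fragment sizes: `ξ_∅ = 1`, `ξ_{ui} = ξ̃_{ui} ξ_u`. -/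
def xi (M : FragModel Ω P q ν) : List ℕ → Ω → ℝ
  | [] => fun _ => 1
  | i :: u => fun ω => (M.xit u ω).1 i * M.xi u ω

/-- Left endpoints: `l_∅ = 0`, `l_{ui} = l_u + ξ_u (ξ̃_{u1} + ⋯ + ξ̃_{u(i-1)})`. -/
def lpos (M : FragModel Ω P q ν) : List ℕ → Ω → ℝ
  | [] => fun _ => 0
  | i :: u => fun ω => M.lpos u ω + M.xi u ω * ∑ j ∈ Finset.range i, (M.xit u ω).1 j

/-- Tag sets: `A_u = {k : Y_k ∈ [l_u, l_u + ξ_u)}`. -/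
def tagSet (M : FragModel Ω P q ν) (u : List ℕ) (ω : Ω) : Finset (Fin q) :=
  Finset.univ.filter fun k => M.Y k ω ∈ Set.Ico (M.lpos u ω) (M.lpos u ω + M.xi u ω)

/-- `S_n^{(i)} = -log ξ_u` for the (a.s. unique) node `u` of generation `n` carrying
tag `i`. -/
def Sgen (M : FragModel Ω P q ν) (n : ℕ) (i : Fin q) (ω : Ω) : ℝ :=
  sInf {x | ∃ u : List ℕ, u.length = n ∧ i ∈ M.tagSet u ω ∧ x = -Real.log (M.xi u ω)}

/-- Residual lifetime of the fragment carrying tag `i`: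
`B_t^{(i)} = inf {S_n^{(i)} : S_n^{(i)} > t} - t`. -/
def Bres (M : FragModel Ω P q ν) (t : ℝ) (i : Fin q) (ω : Ω) : ℝ :=
  sInf {x | ∃ n : ℕ, x = M.Sgen n i ω ∧ t < x} - t

/-- The tree `𝒯₁`: nodes with at least one tag whose parent is still of size `≥ ε`,
together with the root. -/
def Tone (M : FragModel Ω P q ν) (ε : ℝ) (ω : Ω) : Set (List ℕ) :=
  {u | u ≠ [] ∧ M.tagSet u ω ≠ ∅ ∧ ε ≤ M.xi u.tail ω} ∪ {[]}

/-- Leaves of a subtree of the genealogical tree. -/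
def leavesOf (T : Set (List ℕ)) : Set (List ℕ) := {u ∈ T | ∀ i : ℕ, (i :: u) ∉ T}

/-- The nodes of `𝒯₁` alive at time `t`:
`S(t) = {u ∈ 𝒯₁ : -log ξ_{a(u)} ≤ t < -log ξ_u}`. -/
def Sliv (M : FragModel Ω P q ν) (ε t : ℝ) (ω : Ω) : Set (List ℕ) :=
  {u | u ∈ M.Tone ε ω ∧ -Real.log (M.xi u.tail ω) ≤ t ∧ t < -Real.log (M.xi u ω)}

/-- `L_t = ∑_{u ∈ S(t)} (#A_u - 1)`. -/
def Lsum (M : FragModel Ω P q ν) (ε t : ℝ) (ω : Ω) : ℝ :=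
  ∑' u : List ℕ, if u ∈ M.Sliv ε t ω then ((M.tagSet u ω).card : ℝ) - 1 else 0

/-- `∑_{u ∈ S(t)} 1_{#A_u = 1}`. -/
def Nsing (M : FragModel Ω P q ν) (ε t : ℝ) (ω : Ω) : ℝ :=
  ∑' u : List ℕ, if u ∈ M.Sliv ε t ω ∧ (M.tagSet u ω).card = 1 then (1 : ℝ) else 0

/-- The event `C_{k,l}(t)`. -/
def Ckl (M : FragModel Ω P q ν) (ε t : ℝ) (k l : ℕ) : Set Ω :=
  {ω | M.Nsing ε t ω = k ∧ M.Lsum ε t ω = l}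

/-- The tree `𝒯₂`: nodes of `𝒯₁` whose parent carries at least two tags, together
with the root. -/
def Ttwo (M : FragModel Ω P q ν) (ε : ℝ) (ω : Ω) : Set (List ℕ) :=
  {u | u ∈ M.Tone ε ω ∧ u ≠ [] ∧ 2 ≤ (M.tagSet u.tail ω).card} ∪ {[]}

/-- `ℒ₂`: leaves of `𝒯₂` carrying exactly one tag. -/
def Ltwo (M : FragModel Ω P q ν) (ε : ℝ) (ω : Ω) : Set (List ℕ) :=
  {u | u ∈ M.Ttwo ε ω ∧ (∀ i : ℕ, (i :: u) ∉ M.Ttwo ε ω) ∧ (M.tagSet u ω).card = 1}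

/-- The σ-algebra `σ(ℒ₂)` generated by the random set `ℒ₂`. -/
def sigmaLtwo (M : FragModel Ω P q ν) (ε : ℝ) : MeasurableSpace Ω :=
  MeasurableSpace.comap (fun ω => M.Ltwo ε ω)
    (@MeasurableSpace.pi (List ℕ) (fun _ => Prop) (fun _ => ⊤))

/-- The frozen fragments: `𝒰_ε = {u : ξ_{a(u)} ≥ ε > ξ_u}`. -/
def Ueps (M : FragModel Ω P q ν) (ε : ℝ) (ω : Ω) : Set (List ℕ) :=
  {u | ε ≤ M.xi u.tail ω ∧ M.xi u ω < ε}

/-- The empirical measure applied to `f` : `γ_T(f) = ∑_{u ∈ 𝒰_ε} ξ_u f(ξ_u/ε)`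
(`T = -log ε`). -/
def gammaT (M : FragModel Ω P q ν) (ε : ℝ) (f : ℝ → ℝ) (ω : Ω) : ℝ :=
  ∑' u : List ℕ, if u ∈ M.Ueps ε ω then M.xi u ω * f (M.xi u ω / ε) else 0

end FragModel

/-- Membership in `ℬ⁰_sym(1)`: bounded, measurable, centered for `η`. -/
def memB0 (π : Measure ℝ) (μ : ℝ) (f : ℝ → ℝ) : Prop :=
  Measurable f ∧ (∃ C : ℝ, ∀ x, |f x| ≤ C) ∧ etaF π μ f = 0

/-- The symmetrized tensor product `(f₁ ⊗ ⋯ ⊗ f_q)_sym`. -/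
def tensSym (q : ℕ) (f : Fin q → ℝ → ℝ) (x : Fin q → ℝ) : ℝ :=
  (1 / (Nat.factorial q : ℝ)) * ∑ σ : Equiv.Perm (Fin q), ∏ i, f (σ i) (x i)

/-- `K₁(q) = ∑_{i=1}^q q!/(q-i)!`. -/
def K1 (q : ℕ) : ℝ := ∑ i ∈ Finset.Icc 1 q, (Nat.factorial q : ℝ) / (Nat.factorial (q - i))

namespace Frag8

abbrev Phi : Type := List ℕ → Sdown

def xiF (φ : Phi) : List ℕ → ℝ
  | [] => 1
  | i :: u => (φ u).1 i * xiF φ u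

def lposF (φ : Phi) : List ℕ → ℝ
  | [] => 0
  | i :: u => lposF φ u + xiF φ u * ∑ j ∈ Finset.range i, (φ u).1 j

def IvF (φ : Phi) (u : List ℕ) : Set ℝ := Set.Ico (lposF φ u) (lposF φ u + xiF φ u)

def liveF (t : ℝ) (φ : Phi) (u : List ℕ) : Prop :=
  -Real.log (xiF φ u.tail) ≤ t ∧ t < -Real.log (xiF φ u)

def cohF (t : ℝ) (φ : Phi) (x y : ℝ) : Prop :=
  ∃ u : List ℕ, liveF t φ u ∧ x ∈ IvF φ u ∧ y ∈ IvF φ u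

lemma s_nonneg (s : Sdown) (i : ℕ) : 0 ≤ s.1 i := s.2.2.1 i

lemma sum_range_nonneg (s : Sdown) (n : ℕ) : 0 ≤ ∑ j ∈ Finset.range n, s.1 j :=
  Finset.sum_nonneg fun j _ => s_nonneg s j

lemma sum_range_le_one (s : Sdown) (n : ℕ) : ∑ j ∈ Finset.range n, s.1 j ≤ 1 := s.2.2.2 n

lemma sum_range_mono (s : Sdown) {m n : ℕ} (h : m ≤ n) :
    ∑ j ∈ Finset.range m, s.1 j ≤ ∑ j ∈ Finset.range n, s.1 j :=
  Finset.sum_le_sum_of_subset_of_nonneg (Finset.range_subset_range.mpr h)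
    (fun j _ _ => s_nonneg s j)

lemma s_le_one (s : Sdown) (i : ℕ) : s.1 i ≤ 1 := by
  have h1 := sum_range_le_one s (i + 1)
  have h0 := sum_range_nonneg s i
  rw [Finset.sum_range_succ] at h1
  linarith

lemma xiF_nonneg (φ : Phi) : ∀ u : List ℕ, 0 ≤ xiF φ u
  | [] => zero_le_one
  | i :: u => mul_nonneg (s_nonneg _ i) (xiF_nonneg φ u)

lemma xiF_cons_le (φ : Phi) (i : ℕ) (u : List ℕ) : xiF φ (i :: u) ≤ xiF φ u := by
  calc xiF φ (i :: u) = (φ u).1 i * xiF φ u := rfl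
    _ ≤ 1 * xiF φ u := mul_le_mul_of_nonneg_right (s_le_one (φ u) i) (xiF_nonneg φ u)
    _ = xiF φ u := one_mul _

lemma xiF_append_le (φ : Phi) (v u : List ℕ) : xiF φ (v ++ u) ≤ xiF φ u := by
  induction v with
  | nil => simp
  | cons i v ih => exact le_trans (xiF_cons_le φ i (v ++ u)) ih

lemma IvF_cons_subset (φ : Phi) (i : ℕ) (u : List ℕ) : IvF φ (i :: u) ⊆ IvF φ u := by
  have hξ := xiF_nonneg φ u
  have hA0 := sum_range_nonneg (φ u) i
  have hA1 : ∑ j ∈ Finset.range i, (φ u).1 j + (φ u).1 i ≤ 1 := by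
    have := sum_range_le_one (φ u) (i + 1)
    rwa [Finset.sum_range_succ] at this
  intro x hx
  obtain ⟨h1, h2⟩ := hx
  constructor
  · calc lposF φ u ≤ lposF φ u + xiF φ u * ∑ j ∈ Finset.range i, (φ u).1 j := by nlinarith
      _ ≤ x := h1
  · calc x < lposF φ (i :: u) + xiF φ (i :: u) := h2
      _ = lposF φ u + xiF φ u * (∑ j ∈ Finset.range i, (φ u).1 j + (φ u).1 i) := by
          show lposF φ u + xiF φ u * _ + (φ u).1 i * xiF φ u = _; ring
      _ ≤ lposF φ u + xiF φ u := by nlinarith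

lemma IvF_append_subset (φ : Phi) (v u : List ℕ) : IvF φ (v ++ u) ⊆ IvF φ u := by
  induction v with
  | nil => simp
  | cons i v ih => exact le_trans (IvF_cons_subset φ i (v ++ u)) ih

lemma IvF_sibling_disjoint (φ : Phi) {i j : ℕ} (hij : i ≠ j) (u : List ℕ) :
    IvF φ (i :: u) ∩ IvF φ (j :: u) = ∅ := by
  have key : ∀ i j : ℕ, i < j → IvF φ (i :: u) ∩ IvF φ (j :: u) = ∅ := by
    intro i j hij
    have hξ := xiF_nonneg φ u
    have hmono := sum_range_mono (φ u) (Nat.succ_le_of_lt hij)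
    apply Set.eq_empty_iff_forall_notMem.mpr
    rintro x ⟨⟨_, h2⟩, ⟨h3, _⟩⟩
    have e1 : lposF φ (i :: u) + xiF φ (i :: u)
        = lposF φ u + xiF φ u * ∑ l ∈ Finset.range (i+1), (φ u).1 l := by
      show lposF φ u + xiF φ u * _ + (φ u).1 i * xiF φ u = _
      rw [Finset.sum_range_succ]; ring
    have e2 : lposF φ u + xiF φ u * ∑ l ∈ Finset.range (i+1), (φ u).1 l
        ≤ lposF φ (j :: u) := by
      show _ ≤ lposF φ u + xiF φ u * _
      nlinarith
    rw [e1] at h2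
    linarith [le_trans (le_of_lt h2) (le_trans e2 h3)]
  rcases lt_or_gt_of_ne hij with h | h
  · exact key i j h
  · rw [Set.inter_comm]; exact key j i h

lemma prefix_trichotomy : ∀ a b : List ℕ, a <+: b ∨ b <+: a ∨
    ∃ (c a₁ b₁ : List ℕ) (x y : ℕ), x ≠ y ∧ a = c ++ x :: a₁ ∧ b = c ++ y :: b₁
  | [], b => Or.inl (List.nil_prefix)
  | a, [] => Or.inr (Or.inl (List.nil_prefix))
  | x :: a, y :: b => by
    by_cases h : x = y
    · subst h
      rcases prefix_trichotomy a b with h | h | ⟨c, a₁, b₁, z, w, hzw, ha, hb⟩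
      · exact Or.inl (List.cons_prefix_cons.mpr ⟨rfl, h⟩)
      · exact Or.inr (Or.inl (List.cons_prefix_cons.mpr ⟨rfl, h⟩))
      · exact Or.inr (Or.inr ⟨x :: c, a₁, b₁, z, w, hzw, by simp [ha], by simp [hb]⟩)
    · exact Or.inr (Or.inr ⟨[], a, b, x, y, h, rfl, rfl⟩)

lemma suffix_trichotomy (u w : List ℕ) : u <:+ w ∨ w <:+ u ∨
    ∃ (p u₁ w₁ : List ℕ) (i j : ℕ), i ≠ j ∧ u = u₁ ++ i :: p ∧ w = w₁ ++ j :: p := by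
  rcases prefix_trichotomy u.reverse w.reverse with h | h | ⟨c, a₁, b₁, x, y, hxy, ha, hb⟩
  · exact Or.inl (by rwa [List.reverse_prefix] at h)
  · exact Or.inr (Or.inl (by rwa [List.reverse_prefix] at h))
  · refine Or.inr (Or.inr ⟨c.reverse, a₁.reverse, b₁.reverse, x, y, hxy, ?_, ?_⟩)
    · have := congrArg List.reverse ha
      simpa [List.reverse_append] using this
    · have := congrArg List.reverse hb
      simpa [List.reverse_append] using this

lemma liveF_pos {t : ℝ} {φ : Phi} {u : List ℕ} (ht : 0 < t) (h : liveF t φ u) :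
    0 < xiF φ u ∧ xiF φ u < Real.exp (-t) := by
  have hpos : 0 < xiF φ u := by
    rcases lt_or_eq_of_le (xiF_nonneg φ u) with h' | h'
    · exact h'
    · exfalso
      have h2 := h.2
      rw [← h', Real.log_zero] at h2
      simpa using lt_trans ht h2
  refine ⟨hpos, ?_⟩
  have hlog : Real.log (xiF φ u) < -t := by linarith [h.2]
  calc xiF φ u = Real.exp (Real.log (xiF φ u)) := (Real.exp_log hpos).symm
    _ < Real.exp (-t) := Real.exp_lt_exp.mpr hlog

lemma liveF_suffix_eq {t : ℝ} {φ : Phi} {u w : List ℕ} (ht : 0 < t)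
    (hu : liveF t φ u) (hw : liveF t φ w) (hs : u <:+ w) : u = w := by
  by_contra hne
  obtain ⟨r, hr⟩ := hs
  have hrne : r ≠ [] := by rintro rfl; exact hne (by simpa using hr)
  obtain ⟨c, r', rfl⟩ := List.exists_cons_of_ne_nil hrne
  have htail : w.tail = r' ++ u := by rw [← hr]; rfl
  have h1 : xiF φ (r' ++ u) ≤ xiF φ u := xiF_append_le φ r' u
  have h2 : xiF φ u < Real.exp (-t) := (liveF_pos ht hu).2
  have hwt : -Real.log (xiF φ w.tail) ≤ t := hw.1
  rw [htail] at hwt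
  rcases lt_or_eq_of_le (xiF_nonneg φ (r' ++ u)) with hp | hp
  · have : Real.log (xiF φ (r' ++ u)) ≥ -t := by linarith
    have : Real.exp (-t) ≤ xiF φ (r' ++ u) := by
      calc Real.exp (-t) ≤ Real.exp (Real.log (xiF φ (r' ++ u))) := Real.exp_le_exp.mpr this
        _ = xiF φ (r' ++ u) := Real.exp_log hp
    linarith
  · -- xiF φ (r' ++ u) = 0, so xiF φ w = 0
    have hw0 : xiF φ w = 0 := by
      rw [← hr]
      show (φ (r' ++ u)).1 c * xiF φ (r' ++ u) = 0
      rw [← hp, mul_zero]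
    have hw2 := hw.2
    rw [hw0, Real.log_zero] at hw2
    simpa using lt_trans ht hw2

lemma IvF_live_disjoint {t : ℝ} {φ : Phi} {u w : List ℕ} (ht : 0 < t)
    (hu : liveF t φ u) (hw : liveF t φ w) (hne : u ≠ w) :
    IvF φ u ∩ IvF φ w = ∅ := by
  rcases suffix_trichotomy u w with h | h | ⟨p, u₁, w₁, i, j, hij, rfl, rfl⟩
  · exact absurd (liveF_suffix_eq ht hu hw h) hne
  · exact absurd (liveF_suffix_eq ht hw hu h).symm hne
  · apply Set.eq_empty_iff_forall_notMem.mpr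
    rintro x ⟨hxu, hxw⟩
    have h1 : x ∈ IvF φ (i :: p) := IvF_append_subset φ u₁ (i :: p) hxu
    have h2 : x ∈ IvF φ (j :: p) := IvF_append_subset φ w₁ (j :: p) hxw
    have := IvF_sibling_disjoint φ hij p
    exact Set.eq_empty_iff_forall_notMem.mp this x ⟨h1, h2⟩

end Frag8

namespace Frag8

open MeasureTheory ProbabilityTheory

lemma measurable_coord (u : List ℕ) (i : ℕ) : Measurable fun φ : Phi => (φ u).1 i :=
  (measurable_pi_apply i).comp (measurable_subtype_coe.comp (measurable_pi_apply u))

lemma measurable_xiF : ∀ u : List ℕ, Measurable fun φ : Phi => xiF φ u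
  | [] => measurable_const
  | i :: u => (measurable_coord u i).mul (measurable_xiF u)

lemma measurable_lposF : ∀ u : List ℕ, Measurable fun φ : Phi => lposF φ u
  | [] => measurable_const
  | i :: u => by
    apply (measurable_lposF u).add
    exact (measurable_xiF u).mul (Finset.measurable_sum _ fun j _ => measurable_coord u j)

lemma measurableSet_cohF {β : Type*} [MeasurableSpace β] {F : β → Phi} {G H : β → ℝ}
    (hF : Measurable F) (hG : Measurable G) (hH : Measurable H) (t : ℝ) :
    MeasurableSet {b | cohF t (F b) (G b) (H b)} := by
  have heq : {b | cohF t (F b) (G b) (H b)} = ⋃ u : List ℕ,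
      ({b | -Real.log (xiF (F b) u.tail) ≤ t} ∩ {b | t < -Real.log (xiF (F b) u)}) ∩
      (({b | lposF (F b) u ≤ G b} ∩ {b | G b < lposF (F b) u + xiF (F b) u}) ∩
       ({b | lposF (F b) u ≤ H b} ∩ {b | H b < lposF (F b) u + xiF (F b) u})) := by
    ext b
    simp only [Set.mem_iUnion, Set.mem_inter_iff, Set.mem_setOf_eq, cohF, liveF, IvF,
      Set.mem_Ico]
    try tauto
  rw [heq]
  apply MeasurableSet.iUnion
  intro u
  have hx : ∀ v : List ℕ, Measurable fun b => xiF (F b) v := fun v => (measurable_xiF v).comp hF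
  have hl : ∀ v : List ℕ, Measurable fun b => lposF (F b) v := fun v => (measurable_lposF v).comp hF
  have hlog : ∀ v : List ℕ, Measurable fun b => -Real.log (xiF (F b) v) := fun v =>
    (Real.measurable_log.comp (hx v)).neg
  exact (((measurableSet_le (hlog _) measurable_const)).inter
      (measurableSet_lt measurable_const (hlog _))).inter
    ((((measurableSet_le (hl u) hG)).inter (measurableSet_lt hG ((hl u).add (hx u)))).inter
      (((measurableSet_le (hl u) hH)).inter (measurableSet_lt hH ((hl u).add (hx u)))))

section Model

variable {Ω : Type*} [MeasurableSpace Ω] {P : Measure Ω} {q : ℕ} {ν : Measure Sdown}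

lemma xi_eq (M : FragModel Ω P q ν) (ω : Ω) : ∀ u : List ℕ,
    M.xi u ω = xiF (fun v => M.xit v ω) u
  | [] => rfl
  | i :: u => by
    show (M.xit u ω).1 i * M.xi u ω = (M.xit u ω).1 i * xiF (fun v => M.xit v ω) u
    rw [xi_eq M ω u]

lemma lpos_eq (M : FragModel Ω P q ν) (ω : Ω) : ∀ u : List ℕ,
    M.lpos u ω = lposF (fun v => M.xit v ω) u
  | [] => rfl
  | i :: u => by
    show M.lpos u ω + M.xi u ω * _ = lposF (fun v => M.xit v ω) u + xiF (fun v => M.xit v ω) u * _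
    rw [lpos_eq M ω u, xi_eq M ω u]

lemma mem_tagSet_iff (M : FragModel Ω P q ν) (ω : Ω) (u : List ℕ) (j : Fin q) :
    j ∈ M.tagSet u ω ↔ M.Y j ω ∈ IvF (fun v => M.xit v ω) u := by
  simp only [FragModel.tagSet, Finset.mem_filter, Finset.mem_univ, true_and, IvF,
    xi_eq M ω, lpos_eq M ω]

-- the `ext` map and the W map
abbrev TyF (q : ℕ) (a : Fin q) : Type := {i : Fin q // i ≠ a} → ℝ

def extY {q : ℕ} {a : Fin q} (y : TyF q a) (i : Fin q) : ℝ :=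
  if h : i = a then 0 else y ⟨i, h⟩

lemma extY_ne {q : ℕ} {a : Fin q} (y : TyF q a) {i : Fin q} (h : i ≠ a) :
    extY y i = y ⟨i, h⟩ := dif_neg h

lemma measurable_extY {q : ℕ} {a : Fin q} (i : Fin q) :
    Measurable fun y : TyF q a => extY y i := by
  by_cases h : i = a
  · simp only [extY, dif_pos h]; exact measurable_const
  · simp only [extY, dif_neg h]; exact measurable_pi_apply _

def Wmap (M : FragModel Ω P q ν) (a : Fin q) (ω : Ω) : Phi × TyF q a :=
  ((fun v => M.xit v ω), fun i => M.Y i.1 ω)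

lemma measurable_Wmap (M : FragModel Ω P q ν) (a : Fin q) : Measurable (Wmap M a) :=
  Measurable.prodMk (measurable_pi_lambda _ fun v => M.meas_xit v)
    (measurable_pi_lambda _ fun i => M.meas_Y i.1)

def Dset (q : ℕ) (a : Fin q) (t : ℝ) (s : Finset (Fin q)) (g : Fin q → Fin q) :
    Set (Phi × TyF q a) :=
  {w | ∀ j ∈ s, cohF t w.1 (extY w.2 j) (extY w.2 (g j))}

def Cset (q : ℕ) (a : Fin q) (t : ℝ) (s : Finset (Fin q)) (g : Fin q → Fin q) :
    Set ((Phi × TyF q a) × ℝ) :=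
  (Prod.fst ⁻¹' Dset q a t s g) ∩ {p | cohF t p.1.1 (extY p.1.2 (g a)) p.2}

lemma measurableSet_Dset (q : ℕ) (a : Fin q) (t : ℝ) (s : Finset (Fin q)) (g : Fin q → Fin q) :
    MeasurableSet (Dset q a t s g) := by
  have heq : Dset q a t s g = ⋂ j ∈ s,
      {w : Phi × TyF q a | cohF t w.1 (extY w.2 j) (extY w.2 (g j))} := by
    ext w; simp [Dset]
  rw [heq]
  exact MeasurableSet.biInter (Set.to_countable _) fun j _ =>
    measurableSet_cohF measurable_fst ((measurable_extY j).comp measurable_snd)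
      ((measurable_extY (g j)).comp measurable_snd) t

lemma measurableSet_Cset (q : ℕ) (a : Fin q) (t : ℝ) (s : Finset (Fin q)) (g : Fin q → Fin q) :
    MeasurableSet (Cset q a t s g) :=
  ((measurableSet_Dset q a t s g).preimage measurable_fst).inter
    (measurableSet_cohF (measurable_fst.comp measurable_fst)
      ((measurable_extY (g a)).comp (measurable_snd.comp measurable_fst)) measurable_snd t)

lemma slice_bound {q : ℕ} {a : Fin q} (t : ℝ) (ht : 0 < t) (s : Finset (Fin q))
    (g : Fin q → Fin q) (w : Phi × TyF q a) :
    (volume.restrict (Set.Icc (0:ℝ) 1)) (Prod.mk w ⁻¹' Cset q a t s g)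
      ≤ (Dset q a t s g).indicator (fun _ => ENNReal.ofReal (Real.exp (-t))) w := by
  by_cases hw : w ∈ Dset q a t s g
  · rw [Set.indicator_of_mem hw]
    have hpre : Prod.mk w ⁻¹' Cset q a t s g = {z | cohF t w.1 (extY w.2 (g a)) z} := by
      ext z
      simp only [Cset, Set.mem_preimage, Set.mem_inter_iff, Set.mem_setOf_eq]
      exact ⟨fun h => h.2, fun h => ⟨hw, h⟩⟩
    rw [hpre]
    by_cases hex : ∃ u, liveF t w.1 u ∧ extY w.2 (g a) ∈ IvF w.1 u
    · obtain ⟨u₀, hu₀, hy₀⟩ := hex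
      have hsub : {z | cohF t w.1 (extY w.2 (g a)) z} ⊆ IvF w.1 u₀ := by
        rintro z ⟨u, hu, hyu, hzu⟩
        rcases eq_or_ne u u₀ with rfl | hne
        · exact hzu
        · exact absurd (Set.mem_inter hyu hy₀)
            (Set.eq_empty_iff_forall_notMem.mp (IvF_live_disjoint ht hu hu₀ hne) _)
      calc (volume.restrict (Set.Icc (0:ℝ) 1)) {z | cohF t w.1 (extY w.2 (g a)) z}
          ≤ (volume.restrict (Set.Icc (0:ℝ) 1)) (IvF w.1 u₀) := measure_mono hsub
        _ ≤ volume (IvF w.1 u₀) := Measure.le_iff'.1 Measure.restrict_le_self _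
        _ = ENNReal.ofReal (xiF w.1 u₀) := by
            rw [IvF, Real.volume_Ico, add_sub_cancel_left]
        _ ≤ ENNReal.ofReal (Real.exp (-t)) :=
            ENNReal.ofReal_le_ofReal (le_of_lt (liveF_pos ht hu₀).2)
    · have hempty : {z | cohF t w.1 (extY w.2 (g a)) z} = ∅ := by
        apply Set.eq_empty_iff_forall_notMem.mpr
        rintro z ⟨u, hu, hyu, _⟩
        exact hex ⟨u, hu, hyu⟩
      rw [hempty]; simp
  · rw [Set.indicator_of_notMem hw]
    have hempty : Prod.mk w ⁻¹' Cset q a t s g = ∅ := by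
      apply Set.eq_empty_iff_forall_notMem.mpr
      intro z hz
      exact hw hz.1
    rw [hempty]; simp

lemma measW {Ω : Type*} [mΩ : MeasurableSpace Ω] {q : ℕ} {a : Fin q}
    (xit : List ℕ → Ω → Sdown) (Y : {i : Fin q // i ≠ a} → Ω → ℝ)
    (h1 : ∀ v, Measurable (xit v)) (h2 : ∀ i, Measurable (Y i)) :
    Measurable (fun ω => ((fun v => xit v ω, fun i => Y i ω) : Phi × TyF q a)) :=
  Measurable.prodMk (measurable_pi_lambda _ h1) (measurable_pi_lambda _ h2)

lemma indepFun_W_Y (M : FragModel Ω P q ν) (a : Fin q) :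
    IndepFun (Wmap M a) (M.Y a) P := by
  set m' : FragIdx q → MeasurableSpace Ω :=
    fun i => (fragTgtMS q i).comap (fragFam q M.xit M.Y i) with hm'
  have h_le : ∀ i, m' i ≤ ‹MeasurableSpace Ω› := by
    intro i
    rcases i with u | kk
    · exact (M.meas_xit u).comap_le
    · exact (M.meas_Y kk).comap_le
  set Sset : Set (FragIdx q) := {i | i ≠ Sum.inr a} with hSset
  have hdisj : Disjoint Sset ({Sum.inr a} : Set (FragIdx q)) := by
    rw [Set.disjoint_left]
    rintro i hi rfl
    exact hi rfl
  have hIndep0 : Indep (⨆ i ∈ Sset, m' i) (⨆ i ∈ ({Sum.inr a} : Set (FragIdx q)), m' i) P :=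
    indep_iSup_of_disjoint h_le M.indep.iIndep hdisj
  have hsing : (⨆ i ∈ ({Sum.inr a} : Set (FragIdx q)), m' i) = m' (Sum.inr a) := by
    exact iSup_singleton
  rw [hsing] at hIndep0
  have hxit : ∀ v : List ℕ, @Measurable Ω Sdown (⨆ i ∈ Sset, m' i) _ (M.xit v) := by
    intro v
    have h1 : @Measurable Ω Sdown (m' (Sum.inl v)) _ (M.xit v) :=
      measurable_iff_comap_le.mpr le_rfl
    exact h1.mono (le_iSup₂ (f := fun i (_ : i ∈ Sset) => m' i) (Sum.inl v) (by simp only [hSset, Set.mem_setOf_eq]; exact fun h => by cases h))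
      le_rfl
  have hyy : ∀ i : {i : Fin q // i ≠ a}, @Measurable Ω ℝ (⨆ i ∈ Sset, m' i) _ (M.Y i.1) := by
    intro i
    have h1 : @Measurable Ω ℝ (m' (Sum.inr i.1)) _ (M.Y i.1) :=
      measurable_iff_comap_le.mpr le_rfl
    exact h1.mono (le_iSup₂ (f := fun i (_ : i ∈ Sset) => m' i) (Sum.inr i.1)
      (by simp only [hSset, Set.mem_setOf_eq]; exact fun h => i.2 (Sum.inr.inj h))) le_rfl
  have hWbig : @Measurable Ω (Phi × TyF q a) (⨆ i ∈ Sset, m' i) _ (Wmap M a) :=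
    measW (mΩ := ⨆ i ∈ Sset, m' i) M.xit (fun i => M.Y i.1) hxit hyy
  have hWle : MeasurableSpace.comap (Wmap M a) inferInstance ≤ ⨆ i ∈ Sset, m' i :=
    measurable_iff_comap_le.mp hWbig
  rw [IndepFun_iff_Indep, Indep_iff]
  intro t1 t2 h1 h2
  exact (Indep_iff _ _ _).1 hIndep0 t1 t2 (hWle t1 h1) h2

lemma step_bound [IsProbabilityMeasure P] (M : FragModel Ω P q ν) (t : ℝ) (ht : 0 < t)
    (s : Finset (Fin q)) (g : Fin q → Fin q) (a : Fin q) (ha : ∀ x ∈ s, x < a)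
    (hga : g a < a) (hgs : ∀ j ∈ s, g j < j) :
    P {ω | ∀ j ∈ insert a s, cohF t (fun v => M.xit v ω) (M.Y j ω) (M.Y (g j) ω)}
      ≤ ENNReal.ofReal (Real.exp (-t)) *
        P {ω | ∀ j ∈ s, cohF t (fun v => M.xit v ω) (M.Y j ω) (M.Y (g j) ω)} := by
  have hane : ∀ j ∈ s, j ≠ a := fun j hj => ne_of_lt (ha j hj)
  have hgane : ∀ j ∈ s, g j ≠ a := fun j hj => ne_of_lt (lt_trans (hgs j hj) (ha j hj))
  have hextW : ∀ (ω : Ω) (i : Fin q) (h : i ≠ a), extY ((Wmap M a ω).2) i = M.Y i ω :=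
    fun ω i h => extY_ne _ h
  have hED : Wmap M a ⁻¹' Dset q a t s g
      = {ω | ∀ j ∈ s, cohF t (fun v => M.xit v ω) (M.Y j ω) (M.Y (g j) ω)} := by
    ext ω
    simp only [Set.mem_preimage, Dset, Set.mem_setOf_eq]
    constructor
    · intro h j hj
      have h2 := h j hj
      rwa [hextW ω j (hane j hj), hextW ω (g j) (hgane j hj)] at h2
    · intro h j hj
      rw [hextW ω j (hane j hj), hextW ω (g j) (hgane j hj)]
      exact h j hj
  have hDiff : ∀ ω : Ω, (Wmap M a ω ∈ Dset q a t s g) ↔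
      ∀ j ∈ s, cohF t (fun v => M.xit v ω) (M.Y j ω) (M.Y (g j) ω) := by
    intro ω
    have := Set.ext_iff.mp hED ω
    exact this
  have hEC : (fun ω => (Wmap M a ω, M.Y a ω)) ⁻¹' Cset q a t s g
      = {ω | ∀ j ∈ insert a s, cohF t (fun v => M.xit v ω) (M.Y j ω) (M.Y (g j) ω)} := by
    ext ω
    simp only [Set.mem_preimage, Cset, Set.mem_inter_iff, Set.mem_setOf_eq]
    constructor
    · rintro ⟨hD, hA⟩ j hj
      rcases Finset.mem_insert.mp hj with rfl | hj
      · rw [hextW ω (g j) (ne_of_lt hga)] at hA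
        obtain ⟨u, hu, h1, h2⟩ := hA
        exact ⟨u, hu, h2, h1⟩
      · exact (hDiff ω).1 hD j hj
    · intro h
      refine ⟨(hDiff ω).2 (fun j hj => h j (Finset.mem_insert_of_mem hj)), ?_⟩
      rw [hextW ω (g a) (ne_of_lt hga)]
      obtain ⟨u, hu, h1, h2⟩ := h a (Finset.mem_insert_self a s)
      exact ⟨u, hu, h2, h1⟩
  have hWm : Measurable (Wmap M a) := measurable_Wmap M a
  have hXm : Measurable (M.Y a) := M.meas_Y a
  have hmapprod : P.map (fun ω => (Wmap M a ω, M.Y a ω))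
      = (P.map (Wmap M a)).prod (volume.restrict (Set.Icc (0:ℝ) 1)) := by
    rw [← M.law_Y a]
    exact (indepFun_iff_map_prod_eq_prod_map_map hWm.aemeasurable hXm.aemeasurable).1
      (indepFun_W_Y M a)
  calc P {ω | ∀ j ∈ insert a s, cohF t (fun v => M.xit v ω) (M.Y j ω) (M.Y (g j) ω)}
      = P ((fun ω => (Wmap M a ω, M.Y a ω)) ⁻¹' Cset q a t s g) := by rw [hEC]
    _ = (P.map (fun ω => (Wmap M a ω, M.Y a ω))) (Cset q a t s g) :=
        (Measure.map_apply (hWm.prodMk hXm) (measurableSet_Cset q a t s g)).symm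
    _ = ((P.map (Wmap M a)).prod (volume.restrict (Set.Icc (0:ℝ) 1))) (Cset q a t s g) := by
        rw [hmapprod]
    _ = ∫⁻ w, (volume.restrict (Set.Icc (0:ℝ) 1)) (Prod.mk w ⁻¹' Cset q a t s g)
          ∂(P.map (Wmap M a)) := Measure.prod_apply (measurableSet_Cset q a t s g)
    _ ≤ ∫⁻ w, (Dset q a t s g).indicator (fun _ => ENNReal.ofReal (Real.exp (-t))) w
          ∂(P.map (Wmap M a)) := lintegral_mono (slice_bound t ht s g)
    _ = ENNReal.ofReal (Real.exp (-t)) * (P.map (Wmap M a)) (Dset q a t s g) :=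
        lintegral_indicator_const (measurableSet_Dset q a t s g) _
    _ = ENNReal.ofReal (Real.exp (-t)) *
        P {ω | ∀ j ∈ s, cohF t (fun v => M.xit v ω) (M.Y j ω) (M.Y (g j) ω)} := by
        rw [Measure.map_apply hWm (measurableSet_Dset q a t s g), hED]

lemma key [IsProbabilityMeasure P] (M : FragModel Ω P q ν) (t : ℝ) (ht : 0 < t)
    (J : Finset (Fin q)) : ∀ g : Fin q → Fin q, (∀ j ∈ J, g j < j) →
    P {ω | ∀ j ∈ J, cohF t (fun v => M.xit v ω) (M.Y j ω) (M.Y (g j) ω)}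
      ≤ ENNReal.ofReal (Real.exp (-t)) ^ J.card := by
  induction J using Finset.induction_on_max with
  | empty =>
    intro g hg
    simp
  | insert a s ha ih =>
    intro g hg
    have hga : g a < a := hg a (Finset.mem_insert_self a s)
    have hnot : a ∉ s := fun h => lt_irrefl a (ha a h)
    have hgs : ∀ j ∈ s, g j < j := fun j hj => hg j (Finset.mem_insert_of_mem hj)
    rw [Finset.card_insert_of_notMem hnot]
    calc P {ω | ∀ j ∈ insert a s, cohF t (fun v => M.xit v ω) (M.Y j ω) (M.Y (g j) ω)}
        ≤ ENNReal.ofReal (Real.exp (-t)) *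
          P {ω | ∀ j ∈ s, cohF t (fun v => M.xit v ω) (M.Y j ω) (M.Y (g j) ω)} :=
          step_bound M t ht s g a ha hga hgs
      _ ≤ ENNReal.ofReal (Real.exp (-t)) * ENNReal.ofReal (Real.exp (-t)) ^ s.card :=
          mul_le_mul_right (ih g hgs) _
      _ = ENNReal.ofReal (Real.exp (-t)) ^ (s.card + 1) := (pow_succ' _ _).symm

end Model
end Frag8


namespace Frag8
open MeasureTheory

variable {Ω : Type*} [MeasurableSpace Ω] {P : Measure Ω} {q : ℕ} {ν : Measure Sdown}

lemma exists_Jg (M : FragModel Ω P q ν) (hq : 0 < q) (ε t : ℝ) (ht : 0 < t)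
    {k : ℕ} (hk1 : 0 < k) (ω : Ω) (h : (k : ℝ) ≤ M.Lsum ε t ω) :
    ∃ J : Finset (Fin q), ∃ g : Fin q → Fin q, J.card = k ∧ (∀ j ∈ J, g j < j) ∧
      (∀ j ∉ J, g j = j) ∧
      ∀ j ∈ J, cohF t (fun v => M.xit v ω) (M.Y j ω) (M.Y (g j) ω) := by
  classical
  set φ : Phi := fun v => M.xit v ω with hφ
  set S : Set (List ℕ) := M.Sliv ε t ω with hS
  set A : List ℕ → Finset (Fin q) := fun u => M.tagSet u ω with hA
  have hlive : ∀ u ∈ S, liveF t φ u := by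
    intro u hu
    obtain ⟨-, h1, h2⟩ := hu
    constructor
    · rw [← xi_eq M ω]; exact h1
    · rw [← xi_eq M ω]; exact h2
  have hAne : ∀ u ∈ S, (A u).Nonempty := by
    intro u hu
    obtain ⟨hT, -, h2⟩ := hu
    rcases hT with ⟨-, hne, -⟩ | h0
    · exact Finset.nonempty_iff_ne_empty.mpr hne
    · exfalso
      have : u = [] := h0
      rw [this] at h2
      have : M.xi [] ω = 1 := rfl
      rw [this, Real.log_one, neg_zero] at h2
      exact absurd h2 (not_lt.mpr (le_of_lt ht))
  have hIv : ∀ (j : Fin q) (u : List ℕ), j ∈ A u ↔ M.Y j ω ∈ IvF φ u := fun j u =>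
    mem_tagSet_iff M ω u j
  have hdisjA : ∀ u ∈ S, ∀ w ∈ S, u ≠ w → ∀ j : Fin q, j ∈ A u → j ∉ A w := by
    intro u hu w hw hne j hju hjw
    have h1 := (hIv j u).mp hju
    have h2 := (hIv j w).mp hjw
    exact Set.eq_empty_iff_forall_notMem.mp
      (IvF_live_disjoint ht (hlive u hu) (hlive w hw) hne) _ ⟨h1, h2⟩
  have hfin : S.Finite := by
    have hinj : Function.Injective (fun u : S => (A u.1).min' (hAne u.1 u.2)) := by
      intro u w huw
      by_contra hne
      have hne' : u.1 ≠ w.1 := fun h => hne (Subtype.ext h)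
      have h1 : (A u.1).min' (hAne u.1 u.2) ∈ A u.1 := Finset.min'_mem _ _
      have huw' : (A u.1).min' (hAne u.1 u.2) = (A w.1).min' (hAne w.1 w.2) := huw
      have h2 : (A u.1).min' (hAne u.1 u.2) ∈ A w.1 := by
        rw [huw']; exact Finset.min'_mem _ _
      exact hdisjA u.1 u.2 w.1 w.2 hne' _ h1 h2
    have : Finite S := Finite.of_injective _ hinj
    exact Set.toFinite S
  set F : Finset (List ℕ) := hfin.toFinset with hF
  have hFS : ∀ u, u ∈ F ↔ u ∈ S := fun u => hfin.mem_toFinset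
  have hLs : M.Lsum ε t ω = ∑ u ∈ F, (((A u).card : ℝ) - 1) := by
    rw [FragModel.Lsum, tsum_eq_sum (s := F)
      (fun u hu => if_neg (fun hmem => hu ((hFS u).mpr hmem)))]
    exact Finset.sum_congr rfl fun u hu => if_pos ((hFS u).mp hu)
  have hcard1 : ∀ u ∈ F, 1 ≤ (A u).card := fun u hu =>
    Finset.card_pos.mpr (hAne u ((hFS u).mp hu))
  have hsumN : k ≤ ∑ u ∈ F, ((A u).card - 1) := by
    have : (k : ℝ) ≤ ∑ u ∈ F, (((A u).card - 1 : ℕ) : ℝ) := by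
      rw [hLs] at h
      refine h.trans_eq (Finset.sum_congr rfl fun u hu => ?_)
      rw [Nat.cast_sub (hcard1 u hu), Nat.cast_one]
    exact_mod_cast this.trans_eq (Nat.cast_sum F _).symm
  set m0 : Fin q := ⟨0, hq⟩ with hm0
  set mins : List ℕ → Fin q := fun u => if h : (A u).Nonempty then (A u).min' h else m0
    with hmins
  have hminsF : ∀ u ∈ F, mins u ∈ A u := by
    intro u hu
    rw [hmins]
    simp only [dif_pos (hAne u ((hFS u).mp hu))]
    exact Finset.min'_mem _ _
  set J₀ : Finset (Fin q) := F.biUnion (fun u => (A u).erase (mins u)) with hJ₀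
  have hcardJ₀ : J₀.card = ∑ u ∈ F, ((A u).card - 1) := by
    rw [hJ₀, Finset.card_biUnion]
    · exact Finset.sum_congr rfl fun u hu => by
        rw [Finset.card_erase_of_mem (hminsF u hu)]
    · intro u hu w hw hne
      apply Finset.disjoint_left.mpr
      intro j hju hjw
      exact hdisjA u ((hFS u).mp hu) w ((hFS w).mp hw) hne j
        (Finset.mem_of_mem_erase hju) (Finset.mem_of_mem_erase hjw)
  have hkJ₀ : k ≤ J₀.card := hcardJ₀ ▸ hsumN
  obtain ⟨J, hJsub, hJcard⟩ := Finset.exists_subset_card_eq hkJ₀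
  have hch : ∀ j ∈ J, ∃ u, u ∈ F ∧ j ∈ (A u).erase (mins u) := by
    intro j hj
    have := hJsub hj
    rw [hJ₀, Finset.mem_biUnion] at this
    obtain ⟨u, hu1, hu2⟩ := this
    exact ⟨u, hu1, hu2⟩
  choose! uf hu1 hu2 using hch
  refine ⟨J, fun j => if j ∈ J then mins (uf j) else j, hJcard, ?_, fun j hj => if_neg hj, ?_⟩
  · intro j hj
    show (if j ∈ J then mins (uf j) else j) < j
    rw [if_pos hj]
    have hmem := hu2 j hj
    have hminmem : mins (uf j) ∈ A (uf j) := hminsF _ (hu1 j hj)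
    have hjA : j ∈ A (uf j) := Finset.mem_of_mem_erase hmem
    have hjne : j ≠ mins (uf j) := Finset.ne_of_mem_erase hmem
    have hle : mins (uf j) ≤ j := by
      have hnemp := hAne _ ((hFS _).mp (hu1 j hj))
      rw [hmins]
      simp only [dif_pos hnemp]
      exact Finset.min'_le _ _ hjA
    exact lt_of_le_of_ne hle (Ne.symm hjne)
  · intro j hj
    show cohF t φ (M.Y j ω) (M.Y (if j ∈ J then mins (uf j) else j) ω)
    rw [if_pos hj]
    have hSmem := (hFS _).mp (hu1 j hj)
    exact ⟨uf j, hlive _ hSmem, (hIv j (uf j)).mp (Finset.mem_of_mem_erase (hu2 j hj)),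
      (hIv (mins (uf j)) (uf j)).mp (hminsF _ (hu1 j hj))⟩

end Frag8


namespace Frag8

lemma card_Jset_le (q k : ℕ) :
    (Finset.univ.filter (fun p : Finset (Fin q) × (Fin q → Fin q) =>
      p.1.card = k ∧ (∀ j ∈ p.1, p.2 j < j) ∧ (∀ j ∉ p.1, p.2 j = j))).card
      ≤ Nat.factorial q := by
  classical
  have h1 : (Finset.univ : Finset (∀ j : Fin q, Fin (j.1 + 1))).card = Nat.factorial q := by
    rw [Finset.card_univ, Fintype.card_pi]
    simp only [Fintype.card_fin]
    rw [Fin.prod_univ_eq_prod_range (fun i => i + 1) q]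
    exact Finset.prod_range_add_one_eq_factorial q
  refine le_trans (Finset.card_le_card_of_injOn
    (fun p => fun j : Fin q =>
      (⟨min (p.2 j).1 j.1, Nat.lt_succ_of_le (min_le_right _ _)⟩ : Fin (j.1 + 1)))
    (fun p _ => Finset.mem_univ _) ?_) (le_of_eq h1)
  intro p hp p' hp' heq
  rw [Finset.mem_coe, Finset.mem_filter] at hp hp'
  have hle : ∀ (r : Finset (Fin q) × (Fin q → Fin q)),
      ((∀ j ∈ r.1, r.2 j < j) ∧ (∀ j ∉ r.1, r.2 j = j)) → ∀ j, (r.2 j).1 ≤ j.1 := by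
    intro r hr j
    by_cases hj : j ∈ r.1
    · exact le_of_lt (hr.1 j hj)
    · rw [hr.2 j hj]
  have hg : p.2 = p'.2 := by
    funext j
    have h2 : min (p.2 j).1 j.1 = min (p'.2 j).1 j.1 := congrArg Fin.val (congrFun heq j)
    rw [min_eq_left (hle p hp.2.2 j), min_eq_left (hle p' hp'.2.2 j)] at h2
    exact Fin.ext h2
  have hJ : p.1 = p'.1 := by
    ext j
    constructor
    · intro hj
      by_contra hj'
      have e1 : p.2 j < j := hp.2.2.1 j hj
      have e2 : p'.2 j = j := hp'.2.2.2 j hj'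
      rw [hg, e2] at e1
      exact lt_irrefl j e1
    · intro hj
      by_contra hj'
      have e1 : p'.2 j < j := hp'.2.2.1 j hj
      have e2 : p.2 j = j := hp.2.2.2 j hj'
      rw [← hg, e2] at e1
      exact lt_irrefl j e1
  exact Prod.ext hJ hg

end Frag8


/-- `P(L_{αT} ≥ k) ≤ K₁(q) ε^{q/2}` for `k ≥ q/2` and `α ∈ [q/(2k), 1]`. -/
theorem stmt8
    {Ω : Type*} [MeasurableSpace Ω] (P : Measure Ω) [IsProbabilityMeasure P]
    (ν : Measure Sdown) [IsProbabilityMeasure ν]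
    (hν1 : ν {s : Sdown | s.1 0 ∈ Set.Ioo 0 1} = 1)
    (hνcons : ν {s : Sdown | (∑' i, s.1 i) = 1} = 1)
    (q : ℕ) (hq : 0 < q)
    (M : FragModel Ω P q ν)
    (π : Measure ℝ) [IsProbabilityMeasure π]
    (hπpos : π (Set.Iic 0) = 0)
    (hπν : ∀ f : ℝ → ℝ, Measurable f → (∃ C : ℝ, ∀ x, |f x| ≤ C) →
      ∫ s, (∑' i, s.1 i * f (s.1 i)) ∂ν = ∫ x, f (Real.exp (-x)) ∂π)
    (a b : ℝ) (ha : 0 < a) (hab : a < b) (hsupp : msupport π = Set.Icc a b)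
    (k : ℕ) (hk : (q : ℝ) / 2 ≤ k)
    (α : ℝ) (hα : α ∈ Set.Icc ((q : ℝ) / (2 * k)) 1)
    (ε : ℝ) (hε : ε ∈ Set.Ioo (0 : ℝ) 1) :
    (P {ω | (k : ℝ) ≤ M.Lsum ε (α * (-Real.log ε)) ω}).toReal
      ≤ K1 q * ε ^ ((q : ℝ) / 2) := by
  classical
  have hT : 0 < -Real.log ε := by
    have := Real.log_neg hε.1 hε.2
    linarith
  have hq' : (0:ℝ) < q := by exact_mod_cast hq
  have hkpos : (0:ℝ) < k := lt_of_lt_of_le (half_pos hq') hk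
  have hkpos' : 0 < k := by exact_mod_cast hkpos
  have hα0 : 0 < α := lt_of_lt_of_le (div_pos hq' (by positivity)) hα.1
  set t : ℝ := α * -Real.log ε with hts
  have ht : 0 < t := mul_pos hα0 hT
  set c : ENNReal := ENNReal.ofReal (Real.exp (-t)) with hc
  set 𝒥 : Finset (Finset (Fin q) × (Fin q → Fin q)) := Finset.univ.filter (fun p =>
    p.1.card = k ∧ (∀ j ∈ p.1, p.2 j < j) ∧ (∀ j ∉ p.1, p.2 j = j)) with h𝒥
  have hsub : {ω | (k:ℝ) ≤ M.Lsum ε t ω} ⊆ ⋃ p ∈ 𝒥,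
      {ω | ∀ j ∈ p.1, Frag8.cohF t (fun v => M.xit v ω) (M.Y j ω) (M.Y (p.2 j) ω)} := by
    intro ω hω
    obtain ⟨J, g, h1, h2, h3, h4⟩ := Frag8.exists_Jg M hq ε t ht hkpos' ω hω
    have hmem : ((J, g) : Finset (Fin q) × (Fin q → Fin q)) ∈ 𝒥 := by
      rw [h𝒥, Finset.mem_filter]
      exact ⟨Finset.mem_univ _, h1, h2, h3⟩
    exact Set.mem_biUnion hmem (show ω ∈ {ω | ∀ j ∈ (J, g).1,
      Frag8.cohF t (fun v => M.xit v ω) (M.Y j ω) (M.Y ((J, g).2 j) ω)} from h4)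
  have hPbound : P {ω | (k:ℝ) ≤ M.Lsum ε t ω} ≤ (𝒥.card : ENNReal) * c ^ k := by
    calc P {ω | (k:ℝ) ≤ M.Lsum ε t ω}
        ≤ P (⋃ p ∈ 𝒥, {ω | ∀ j ∈ p.1,
            Frag8.cohF t (fun v => M.xit v ω) (M.Y j ω) (M.Y (p.2 j) ω)}) :=
          measure_mono hsub
      _ ≤ ∑ p ∈ 𝒥, P {ω | ∀ j ∈ p.1,
            Frag8.cohF t (fun v => M.xit v ω) (M.Y j ω) (M.Y (p.2 j) ω)} :=
          measure_biUnion_finset_le _ _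
      _ ≤ ∑ _p ∈ 𝒥, c ^ k := by
          refine Finset.sum_le_sum (fun p hp => ?_)
          rw [h𝒥, Finset.mem_filter] at hp
          have := Frag8.key M t ht p.1 p.2 hp.2.2.1
          rwa [hp.2.1] at this
      _ = (𝒥.card : ENNReal) * c ^ k := by rw [Finset.sum_const, nsmul_eq_mul]
  have hfin : (𝒥.card : ENNReal) * c ^ k ≠ ⊤ :=
    ENNReal.mul_ne_top (ENNReal.natCast_ne_top _) (ENNReal.pow_ne_top ENNReal.ofReal_ne_top)
  have hreal := ENNReal.toReal_mono hfin hPbound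
  rw [ENNReal.toReal_mul, ENNReal.toReal_pow, hc, ENNReal.toReal_natCast,
    ENNReal.toReal_ofReal (Real.exp_nonneg _)] at hreal
  refine le_trans hreal ?_
  have hexp1 : Real.exp (-t) = ε ^ α := by
    rw [Real.rpow_def_of_pos hε.1, hts]
    congr 1
    ring
  have hexp2 : Real.exp (-t) ^ k = ε ^ (α * k) := by
    rw [hexp1, ← Real.rpow_natCast (ε ^ α) k, ← Real.rpow_mul (le_of_lt hε.1)]
  have hqk : (q:ℝ)/2 ≤ α * k := by
    have h1 : (q:ℝ)/(2*k) * k ≤ α * k :=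
      mul_le_mul_of_nonneg_right hα.1 (le_of_lt hkpos)
    have h2 : (q:ℝ)/2 = (q:ℝ)/(2*k) * k := by
      field_simp
    rw [h2]
    exact h1
  have hexp3 : Real.exp (-t) ^ k ≤ ε ^ ((q:ℝ)/2) := by
    rw [hexp2]
    exact Real.rpow_le_rpow_of_exponent_ge hε.1 (le_of_lt hε.2) hqk
  have hcard : (𝒥.card : ℝ) ≤ (Nat.factorial q : ℝ) := by
    exact_mod_cast Frag8.card_Jset_le q k
  have hK1 : (Nat.factorial q : ℝ) ≤ K1 q := by
    rw [K1]
    have hmem : q ∈ Finset.Icc 1 q := Finset.mem_Icc.mpr ⟨hq, le_refl q⟩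
    have hs := Finset.single_le_sum
      (f := fun i => (Nat.factorial q : ℝ) / (Nat.factorial (q - i)))
      (fun i _ => by positivity) hmem
    simpa using hs
  calc (𝒥.card : ℝ) * Real.exp (-t) ^ k
      ≤ (Nat.factorial q : ℝ) * (ε ^ ((q:ℝ)/2)) :=
        mul_le_mul hcard hexp3 (by positivity) (by positivity)
    _ ≤ K1 q * ε ^ ((q:ℝ)/2) :=
        mul_le_mul_of_nonneg_right hK1 (Real.rpow_nonneg (le_of_lt hε.1) _)


end
end
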